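/- Let u_i, u_j, u_k, u_l ∈ ℝ³ be points with distinct projections p_i, p_j, p_k, p_l ∈ ℝ² (forgetting the z-coordinate), such that the triangles (p_i, p_j, p_k) and (p_l, p_j, p_i) are nondegenerate, and suppose the four points u_i, u_j, u_k, u_l have integer coordinates bounded so that all pairwise differences have norm at most L with L ≥ 1. Then the canonical stress value ω_{ij} = [u_i u_j u_k u_l] / ([p_i p_j p_k][p_l p_j p_i]) satisfies: if [u_i u_j u_k u_l] ≠ 0 then 1/L⁴ ≤ |ω_{ij}| ≤ L³, where [u_i u_j u_k u_l] is the 4×4 determinant with columns (x, y, z, 1)ᵀ and [pqr] the 3×3 determinant with columns (x, y, 1)ᵀ. -/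

import Mathlib

open Finset

/-- `[p q r]`: twice the signed area of the triangle `p q r` in `ℝ²`. -/
def br2 (p q r : Fin 2 → ℝ) : ℝ :=
  (q 0 - p 0) * (r 1 - p 1) - (q 1 - p 1) * (r 0 - p 0)

/-- `[a b c d]`: the 4×4 determinant with columns `(x, y, z, 1)ᵀ`. -/
def det4 (a b c d : Fin 3 → ℝ) : ℝ :=
  Matrix.det !![a 0, b 0, c 0, d 0; a 1, b 1, c 1, d 1;
                a 2, b 2, c 2, d 2; 1, 1, 1, 1]

/-- The Euclidean norm on `Fin m → ℝ`. -/
noncomputable def normE {m : ℕ} (x : Fin m → ℝ) : ℝ := Real.sqrt (∑ k, x k ^ 2)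

lemma cs2 (x0 x1 y0 y1 : ℝ) : (x0*y1 - x1*y0)^2 ≤ (x0^2+x1^2)*(y0^2+y1^2) := by
  nlinarith [sq_nonneg (x0*y0+x1*y1)]

lemma hadamard3 (a0 a1 a2 b0 b1 b2 c0 c1 c2 : ℝ) :
    (a0*((b1*c2)-(b2*c1)) - a1*((b0*c2)-(b2*c0)) + a2*((b0*c1)-(b1*c0)))^2
      ≤ (a0^2+a1^2+a2^2)*((b0^2+b1^2+b2^2)*(c0^2+c1^2+c2^2)) := by
  have h2 : (b1*c2-b2*c1)^2+(b0*c2-b2*c0)^2+(b0*c1-b1*c0)^2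
      ≤ (b0^2+b1^2+b2^2)*(c0^2+c1^2+c2^2) := by
    nlinarith [sq_nonneg (b0*c0+b1*c1+b2*c2)]
  have h1 : (a0*((b1*c2)-(b2*c1)) - a1*((b0*c2)-(b2*c0)) + a2*((b0*c1)-(b1*c0)))^2
      ≤ (a0^2+a1^2+a2^2)*((b1*c2-b2*c1)^2+(b0*c2-b2*c0)^2+(b0*c1-b1*c0)^2) := by
    nlinarith [sq_nonneg (a0*(b0*c2-b2*c0)+a1*(b1*c2-b2*c1)),
      sq_nonneg (a0*(b0*c1-b1*c0)-a2*(b1*c2-b2*c1)),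
      sq_nonneg (a1*(b0*c1-b1*c0)+a2*(b0*c2-b2*c0))]
  calc _ ≤ (a0^2+a1^2+a2^2)*((b1*c2-b2*c1)^2+(b0*c2-b2*c0)^2+(b0*c1-b1*c0)^2) := h1
    _ ≤ (a0^2+a1^2+a2^2)*((b0^2+b1^2+b2^2)*(c0^2+c1^2+c2^2)) :=
      mul_le_mul_of_nonneg_left h2 (by positivity)

lemma abs_le_of_sq (x c : ℝ) (hc : 0 ≤ c) (h : x^2 ≤ c^2) : |x| ≤ c := by
  nlinarith [abs_nonneg x, sq_abs x]

lemma det4_eq (a b c d : Fin 3 → ℝ) : det4 a b c d =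
    -((b 0 - a 0)*((c 1 - a 1)*(d 2 - a 2)-(c 2 - a 2)*(d 1 - a 1))
    - (b 1 - a 1)*((c 0 - a 0)*(d 2 - a 2)-(c 2 - a 2)*(d 0 - a 0))
    + (b 2 - a 2)*((c 0 - a 0)*(d 1 - a 1)-(c 1 - a 1)*(d 0 - a 0))) := by
  unfold det4
  simp [Matrix.det_succ_row_zero, Fin.sum_univ_succ, Fin.succAbove,
    show Fin.castSucc (2:Fin 3) = (2:Fin 4) from rfl]
  ring

set_option maxHeartbeats 1000000 in
/-- bounds on the canonical Maxwell–Cremona stress of an edge.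
Let `u_i, u_j, u_k, u_l ∈ ℤ³` have distinct planar projections
`p_i, p_j, p_k, p_l` (forgetting the `z`-coordinate), with both triangles
`(p_i, p_j, p_k)` and `(p_l, p_j, p_i)` nondegenerate, and all pairwise
differences of the `u`'s of norm at most `L ≥ 1`.  If
`[u_i u_j u_k u_l] ≠ 0` then the canonical stress
`ω = [u_i u_j u_k u_l]/([p_i p_j p_k][p_l p_j p_i])` satisfies
`1/L⁴ ≤ |ω| ≤ L³`. -/
theorem stmt18
    (ui uj uk ul : Fin 3 → ℤ)
    (pi pj pk pl : Fin 2 → ℝ)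
    (hpi : pi = fun k : Fin 2 => (ui k.castSucc : ℝ))
    (hpj : pj = fun k : Fin 2 => (uj k.castSucc : ℝ))
    (hpk : pk = fun k : Fin 2 => (uk k.castSucc : ℝ))
    (hpl : pl = fun k : Fin 2 => (ul k.castSucc : ℝ))
    (hdist : pi ≠ pj ∧ pi ≠ pk ∧ pi ≠ pl ∧ pj ≠ pk ∧ pj ≠ pl ∧ pk ≠ pl)
    (hnd1 : br2 pi pj pk ≠ 0) (hnd2 : br2 pl pj pi ≠ 0)
    (L : ℝ) (hL : 1 ≤ L)
    (hdiff : ∀ v w : Fin 3 → ℤ,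
      v ∈ ({ui, uj, uk, ul} : Set (Fin 3 → ℤ)) →
      w ∈ ({ui, uj, uk, ul} : Set (Fin 3 → ℤ)) →
      normE (fun k => (v k : ℝ) - (w k : ℝ)) ≤ L)
    (ω : ℝ)
    (hω : ω = det4 (fun k => (ui k : ℝ)) (fun k => (uj k : ℝ))
      (fun k => (uk k : ℝ)) (fun k => (ul k : ℝ)) / (br2 pi pj pk * br2 pl pj pi))
    (hnz : det4 (fun k => (ui k : ℝ)) (fun k => (uj k : ℝ))
      (fun k => (uk k : ℝ)) (fun k => (ul k : ℝ)) ≠ 0) :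
    1 / L ^ 4 ≤ |ω| ∧ |ω| ≤ L ^ 3 := by
  have hL0 : (0:ℝ) < L := lt_of_lt_of_le one_pos hL
  have key : ∀ v w : Fin 3 → ℤ,
      v ∈ ({ui, uj, uk, ul} : Set (Fin 3 → ℤ)) →
      w ∈ ({ui, uj, uk, ul} : Set (Fin 3 → ℤ)) →
      ((v 0 : ℝ) - w 0)^2 + ((v 1 : ℝ) - w 1)^2 + ((v 2 : ℝ) - w 2)^2 ≤ L^2 := by
    intro v w hv hw
    have h := hdiff v w hv hw
    unfold normE at h
    rw [Fin.sum_univ_three] at h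
    have hs : (0:ℝ) ≤ ((v 0 : ℝ) - w 0)^2 + ((v 1 : ℝ) - w 1)^2 + ((v 2 : ℝ) - w 2)^2 := by
      positivity
    nlinarith [Real.sq_sqrt hs, Real.sqrt_nonneg
      (((v 0 : ℝ) - w 0)^2 + ((v 1 : ℝ) - w 1)^2 + ((v 2 : ℝ) - w 2)^2)]
  have miu : ui ∈ ({ui, uj, uk, ul} : Set (Fin 3 → ℤ)) := by simp
  have mju : uj ∈ ({ui, uj, uk, ul} : Set (Fin 3 → ℤ)) := by simp
  have mku : uk ∈ ({ui, uj, uk, ul} : Set (Fin 3 → ℤ)) := by simp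
  have mlu : ul ∈ ({ui, uj, uk, ul} : Set (Fin 3 → ℤ)) := by simp
  have S1 := key uj ui mju miu
  have S2 := key uk ui mku miu
  have S3 := key ul ui mlu miu
  have S4 := key uj ul mju mlu
  have S5 := key ui ul miu mlu
  set A : ℤ := (uj 0 - ui 0)*(uk 1 - ui 1) - (uj 1 - ui 1)*(uk 0 - ui 0) with hA
  set B : ℤ := (uj 0 - ul 0)*(ui 1 - ul 1) - (uj 1 - ul 1)*(ui 0 - ul 0) with hB
  set D : ℤ := -((uj 0 - ui 0)*((uk 1 - ui 1)*(ul 2 - ui 2)-(uk 2 - ui 2)*(ul 1 - ui 1))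
    - (uj 1 - ui 1)*((uk 0 - ui 0)*(ul 2 - ui 2)-(uk 2 - ui 2)*(ul 0 - ui 0))
    + (uj 2 - ui 2)*((uk 0 - ui 0)*(ul 1 - ui 1)-(uk 1 - ui 1)*(ul 0 - ui 0))) with hD
  have hAcast : br2 pi pj pk = (A : ℝ) := by
    subst hpi hpj hpk
    simp only [br2, show Fin.castSucc (0:Fin 2) = (0:Fin 3) from rfl,
      show Fin.castSucc (1:Fin 2) = (1:Fin 3) from rfl, hA]
    push_cast; ring
  have hBcast : br2 pl pj pi = (B : ℝ) := by
    subst hpi hpj hpl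
    simp only [br2, show Fin.castSucc (0:Fin 2) = (0:Fin 3) from rfl,
      show Fin.castSucc (1:Fin 2) = (1:Fin 3) from rfl, hB]
    push_cast; ring
  have hDcast : det4 (fun k => (ui k : ℝ)) (fun k => (uj k : ℝ))
      (fun k => (uk k : ℝ)) (fun k => (ul k : ℝ)) = (D : ℝ) := by
    rw [det4_eq, hD]; push_cast; ring
  have hAne : A ≠ 0 := by
    intro h; apply hnd1; rw [hAcast, h]; norm_num
  have hBne : B ≠ 0 := by
    intro h; apply hnd2; rw [hBcast, h]; norm_num
  have hDne : D ≠ 0 := by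
    intro h; apply hnz; rw [hDcast, h]; norm_num
  have hA1 : (1:ℝ) ≤ |(A:ℝ)| := by
    rw [← Int.cast_abs]; exact_mod_cast Int.one_le_abs hAne
  have hB1 : (1:ℝ) ≤ |(B:ℝ)| := by
    rw [← Int.cast_abs]; exact_mod_cast Int.one_le_abs hBne
  have hD1 : (1:ℝ) ≤ |(D:ℝ)| := by
    rw [← Int.cast_abs]; exact_mod_cast Int.one_le_abs hDne
  have hAub : |(A:ℝ)| ≤ L^2 := by
    apply abs_le_of_sq _ _ (by positivity)
    have h1 : ((uj 0 : ℝ) - ui 0)^2 + ((uj 1 : ℝ) - ui 1)^2 ≤ L^2 := by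
      nlinarith [sq_nonneg ((uj 2:ℝ) - ui 2)]
    have h2 : ((uk 0 : ℝ) - ui 0)^2 + ((uk 1 : ℝ) - ui 1)^2 ≤ L^2 := by
      nlinarith [sq_nonneg ((uk 2:ℝ) - ui 2)]
    have hcs := cs2 ((uj 0 : ℝ) - ui 0) ((uj 1 : ℝ) - ui 1) ((uk 0 : ℝ) - ui 0) ((uk 1 : ℝ) - ui 1)
    have hcA : ((A:ℤ):ℝ) = ((uj 0 : ℝ) - ui 0)*((uk 1 : ℝ) - ui 1) - ((uj 1 : ℝ) - ui 1)*((uk 0 : ℝ) - ui 0) := by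
      rw [hA]; push_cast; ring
    rw [hcA]
    calc _ ≤ (((uj 0 : ℝ) - ui 0)^2 + ((uj 1 : ℝ) - ui 1)^2) * (((uk 0 : ℝ) - ui 0)^2 + ((uk 1 : ℝ) - ui 1)^2) := hcs
      _ ≤ L^2 * L^2 := mul_le_mul h1 h2 (by positivity) (by positivity)
      _ = (L^2)^2 := by ring
  have hBub : |(B:ℝ)| ≤ L^2 := by
    apply abs_le_of_sq _ _ (by positivity)
    have h1 : ((uj 0 : ℝ) - ul 0)^2 + ((uj 1 : ℝ) - ul 1)^2 ≤ L^2 := by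
      nlinarith [sq_nonneg ((uj 2:ℝ) - ul 2)]
    have h2 : ((ui 0 : ℝ) - ul 0)^2 + ((ui 1 : ℝ) - ul 1)^2 ≤ L^2 := by
      nlinarith [sq_nonneg ((ui 2:ℝ) - ul 2)]
    have hcs := cs2 ((uj 0 : ℝ) - ul 0) ((uj 1 : ℝ) - ul 1) ((ui 0 : ℝ) - ul 0) ((ui 1 : ℝ) - ul 1)
    have hcB : ((B:ℤ):ℝ) = ((uj 0 : ℝ) - ul 0)*((ui 1 : ℝ) - ul 1) - ((uj 1 : ℝ) - ul 1)*((ui 0 : ℝ) - ul 0) := by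
      rw [hB]; push_cast; ring
    rw [hcB]
    calc _ ≤ (((uj 0 : ℝ) - ul 0)^2 + ((uj 1 : ℝ) - ul 1)^2) * (((ui 0 : ℝ) - ul 0)^2 + ((ui 1 : ℝ) - ul 1)^2) := hcs
      _ ≤ L^2 * L^2 := mul_le_mul h1 h2 (by positivity) (by positivity)
      _ = (L^2)^2 := by ring
  have hDub : |(D:ℝ)| ≤ L^3 := by
    apply abs_le_of_sq _ _ (by positivity)
    have had := hadamard3 ((uj 0 : ℝ) - ui 0) ((uj 1 : ℝ) - ui 1) ((uj 2 : ℝ) - ui 2)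
      ((uk 0 : ℝ) - ui 0) ((uk 1 : ℝ) - ui 1) ((uk 2 : ℝ) - ui 2)
      ((ul 0 : ℝ) - ui 0) ((ul 1 : ℝ) - ui 1) ((ul 2 : ℝ) - ui 2)
    have hcD : ((D:ℤ):ℝ) = -(((uj 0 : ℝ) - ui 0)*((((uk 1 : ℝ) - ui 1)*((ul 2 : ℝ) - ui 2))-(((uk 2 : ℝ) - ui 2)*((ul 1 : ℝ) - ui 1)))
      - ((uj 1 : ℝ) - ui 1)*((((uk 0 : ℝ) - ui 0)*((ul 2 : ℝ) - ui 2))-(((uk 2 : ℝ) - ui 2)*((ul 0 : ℝ) - ui 0)))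
      + ((uj 2 : ℝ) - ui 2)*((((uk 0 : ℝ) - ui 0)*((ul 1 : ℝ) - ui 1))-(((uk 1 : ℝ) - ui 1)*((ul 0 : ℝ) - ui 0)))) := by
      rw [hD]; push_cast; ring
    rw [hcD, neg_sq]
    have hS2S3 : (((uk 0 : ℝ) - ui 0)^2+((uk 1 : ℝ) - ui 1)^2+((uk 2 : ℝ) - ui 2)^2)
        * (((ul 0 : ℝ) - ui 0)^2+((ul 1 : ℝ) - ui 1)^2+((ul 2 : ℝ) - ui 2)^2) ≤ L^2 * L^2 :=
      mul_le_mul S2 S3 (by positivity) (by positivity)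
    calc _ ≤ (((uj 0 : ℝ) - ui 0)^2+((uj 1 : ℝ) - ui 1)^2+((uj 2 : ℝ) - ui 2)^2)
        * ((((uk 0 : ℝ) - ui 0)^2+((uk 1 : ℝ) - ui 1)^2+((uk 2 : ℝ) - ui 2)^2)
          * (((ul 0 : ℝ) - ui 0)^2+((ul 1 : ℝ) - ui 1)^2+((ul 2 : ℝ) - ui 2)^2)) := had
      _ ≤ L^2 * (L^2 * L^2) := mul_le_mul S1 hS2S3 (by positivity) (by positivity)
      _ = (L^3)^2 := by ring
  have hωabs : |ω| = |(D:ℝ)| / (|(A:ℝ)| * |(B:ℝ)|) := by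
    rw [hω, hDcast, hAcast, hBcast, abs_div, abs_mul]
  have hAB1 : (1:ℝ) ≤ |(A:ℝ)| * |(B:ℝ)| := by
    calc (1:ℝ) = 1 * 1 := by ring
      _ ≤ |(A:ℝ)| * |(B:ℝ)| := mul_le_mul hA1 hB1 zero_le_one (le_trans zero_le_one hA1)
  have hABpos : (0:ℝ) < |(A:ℝ)| * |(B:ℝ)| := lt_of_lt_of_le one_pos hAB1
  have hABub : |(A:ℝ)| * |(B:ℝ)| ≤ L^4 := by
    calc |(A:ℝ)| * |(B:ℝ)| ≤ L^2 * L^2 :=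
        mul_le_mul hAub hBub (abs_nonneg _) (by positivity)
      _ = L^4 := by ring
  constructor
  · rw [hωabs, div_le_div_iff₀ (by positivity) hABpos]
    calc 1 * (|(A:ℝ)| * |(B:ℝ)|) = |(A:ℝ)| * |(B:ℝ)| := by ring
      _ ≤ L^4 := hABub
      _ = 1 * L^4 := by ring
      _ ≤ |(D:ℝ)| * L^4 := mul_le_mul_of_nonneg_right hD1 (by positivity)
  · rw [hωabs, div_le_iff₀ hABpos]
    calc |(D:ℝ)| ≤ L^3 := hDub
      _ = L^3 * 1 := by ring
      _ ≤ L^3 * (|(A:ℝ)| * |(B:ℝ)|) := mul_le_mul_of_nonneg_left hAB1 (by positivity)
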